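/- With a, δ, n, α_*, μ₀, θ(α), μ₁(α) as above, define κ(α) = 1 + (a−δ)(1/α_* − 1/α) and κ̄(α) = κ(α)·α/(α + μ₁(α)). Then α ↦ κ̄(α) is increasing on ((2−a)α_*/(1−a), ∞). -/

import Mathlib

lemma stmt_14_simp (a δ : ℝ) (n : ℕ) (ha0 : 0 < a) (ha1 : a < 1) (hδa : δ < a)
    (hn : 2 ≤ n) (x : ℝ) (hx : (n : ℝ) * (a - δ) < (1 - a) * x) :
    (1 + (a - δ) * (1 / (n * (a - δ) / (2 - a)) - 1 / x)) * x /
          (x + ((a - δ) / (1 - a)) *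
            (1 + (1 / ((1 - a) * (x / (n * (a - δ) / (2 - a)) - 1))) * (1 - a)) /
            (1 - 1 / ((1 - a) * (x / (n * (a - δ) / (2 - a)) - 1)))) =
      (((n : ℝ) + 2 - a) * x - n * (a - δ)) * ((1 - a) * x - n * (a - δ)) /
        ((n : ℝ) * x * ((1 - a) * x - ((n : ℝ) - 1) * (a - δ))) := by
  have hb : (0:ℝ) < 1 - a := by linarith
  have hc : (0:ℝ) < a - δ := by linarith
  have h2a : (0:ℝ) < 2 - a := by linarith
  have hn2 : (2:ℝ) ≤ (n:ℝ) := by exact_mod_cast hn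
  have hn0 : (0:ℝ) < (n:ℝ) := by linarith
  have hnc : (0:ℝ) < (n:ℝ) * (a - δ) := by positivity
  have hx0 : 0 < x := by nlinarith
  have hbx : 0 < (1 - a) * x - (n:ℝ) * (a - δ) := by linarith
  have hbx1 : 0 < (1 - a) * x - ((n:ℝ) - 1) * (a - δ) := by nlinarith
  have hE : 0 < (1 - a) * ((2 - a) * x - n * (a - δ)) := by nlinarith
  have hrw : (1 - a) * (x / (n * (a - δ) / (2 - a)) - 1) =
      (1 - a) * ((2 - a) * x - n * (a - δ)) / (n * (a - δ)) := by
    field_simp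
  rw [hrw]
  have h2 : (1:ℝ) - 1 / ((1 - a) * ((2 - a) * x - n * (a - δ)) / (n * (a - δ))) =
      (2 - a) * ((1 - a) * x - n * (a - δ)) / ((1 - a) * ((2 - a) * x - n * (a - δ))) := by
    rw [one_div_div]
    rw [eq_div_iff hE.ne', sub_mul, div_mul_cancel₀ _ hE.ne']
    ring
  rw [h2]
  have hmu : ((a - δ) / (1 - a)) *
      (1 + (1 / ((1 - a) * ((2 - a) * x - n * (a - δ)) / (n * (a - δ)))) * (1 - a)) /
      ((2 - a) * ((1 - a) * x - n * (a - δ)) / ((1 - a) * ((2 - a) * x - n * (a - δ)))) =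
      (a - δ) * x / ((1 - a) * x - n * (a - δ)) := by
    have hE2 : (2 - a) * x - n * (a - δ) ≠ 0 := (by nlinarith : (0:ℝ) < (2 - a) * x - n * (a - δ)).ne'
    generalize hEd : (2 - a) * x - n * (a - δ) = E at *
    have hx : x = (E + n * (a - δ)) / (2 - a) := by rw [← hEd]; field_simp; ring
    subst hx
    field_simp
  rw [hmu]
  have hden : x + (a - δ) * x / ((1 - a) * x - n * (a - δ)) =
      x * ((1 - a) * x - ((n:ℝ) - 1) * (a - δ)) / ((1 - a) * x - n * (a - δ)) := by
    rw [eq_div_iff hbx.ne', add_mul, div_mul_cancel₀ _ hbx.ne']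
    ring
  rw [hden, div_div_eq_mul_div,
    div_eq_div_iff (by positivity : x * ((1 - a) * x - ((n:ℝ) - 1) * (a - δ)) ≠ 0)
      (by positivity : (n:ℝ) * x * ((1 - a) * x - ((n:ℝ) - 1) * (a - δ)) ≠ 0)]
  field_simp
  ring

set_option maxHeartbeats 1000000 in
theorem stmt_14 (a δ : ℝ) (n : ℕ) (ha0 : 0 < a) (ha1 : a < 1) (hδ0 : 0 ≤ δ) (hδa : δ < a)
    (hn : 2 ≤ n) :
    MonotoneOn
      (fun α : ℝ =>
        (1 + (a - δ) * (1 / (n * (a - δ) / (2 - a)) - 1 / α)) * α /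
          (α + ((a - δ) / (1 - a)) *
            (1 + (1 / ((1 - a) * (α / (n * (a - δ) / (2 - a)) - 1))) * (1 - a)) /
            (1 - 1 / ((1 - a) * (α / (n * (a - δ) / (2 - a)) - 1)))))
      (Set.Ioi ((2 - a) * (n * (a - δ) / (2 - a)) / (1 - a))) := by
  have hb : (0:ℝ) < 1 - a := by linarith
  have hc : (0:ℝ) < a - δ := by linarith
  have h2a : (0:ℝ) < 2 - a := by linarith
  have hn2 : (2:ℝ) ≤ (n:ℝ) := by exact_mod_cast hn
  have hn0 : (0:ℝ) < (n:ℝ) := by linarith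
  have hnc : (0:ℝ) < (n:ℝ) * (a - δ) := by positivity
  intro x hx y hy hxy
  simp only [Set.mem_Ioi] at hx hy
  have hdom : (2 - a) * ((n:ℝ) * (a - δ) / (2 - a)) / (1 - a) = (n:ℝ) * (a - δ) / (1 - a) := by
    field_simp
  rw [hdom] at hx hy
  have hx' : (n:ℝ) * (a - δ) < (1 - a) * x := by
    rw [div_lt_iff₀ hb] at hx; linarith
  have hy' : (n:ℝ) * (a - δ) < (1 - a) * y := by
    rw [div_lt_iff₀ hb] at hy; linarith
  have hx0 : 0 < x := by nlinarith
  have hy0 : 0 < y := by nlinarith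
  have hbx : 0 < (1 - a) * x - (n:ℝ) * (a - δ) := by linarith
  have hby : 0 < (1 - a) * y - (n:ℝ) * (a - δ) := by linarith
  have hbx1 : 0 < (1 - a) * x - ((n:ℝ) - 1) * (a - δ) := by nlinarith
  have hby1 : 0 < (1 - a) * y - ((n:ℝ) - 1) * (a - δ) := by nlinarith
  simp only
  rw [stmt_14_simp a δ n ha0 ha1 hδa hn x hx', stmt_14_simp a δ n ha0 ha1 hδa hn y hy']
  rw [div_le_div_iff₀ (by positivity) (by positivity)]
  -- bracket positivity
  have h3 : ((n:ℝ) * (a - δ)) * ((n:ℝ) * (a - δ)) < ((1 - a) * x) * ((1 - a) * y) :=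
    mul_lt_mul'' hx' hy' hnc.le hnc.le
  have hBr : 0 < (1 - a) * ((n:ℝ) + 1) * (2 - a) * (x * y)
      - (n:ℝ)^2 * (1 - a) * (a - δ) * (x + y) + (n:ℝ)^2 * ((n:ℝ) - 1) * (a - δ)^2 := by
    nlinarith [mul_pos hbx hby, mul_nonneg (mul_pos hbx hby).le hn0.le,
      mul_pos hx0 hy0, mul_nonneg (mul_pos hx0 hy0).le hb.le,
      mul_nonneg (mul_nonneg hn0.le hb.le) (mul_pos hx0 hy0).le]
  have hfac : 0 ≤ (n:ℝ) * (a - δ) * (y - x) *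
      ((1 - a) * ((n:ℝ) + 1) * (2 - a) * (x * y)
      - (n:ℝ)^2 * (1 - a) * (a - δ) * (x + y) + (n:ℝ)^2 * ((n:ℝ) - 1) * (a - δ)^2) := by
    have h4 := sub_nonneg.mpr hxy
    positivity
  have key : (((n : ℝ) + 2 - a) * y - n * (a - δ)) * ((1 - a) * y - n * (a - δ)) *
        ((n : ℝ) * x * ((1 - a) * x - ((n : ℝ) - 1) * (a - δ)))
      - (((n : ℝ) + 2 - a) * x - n * (a - δ)) * ((1 - a) * x - n * (a - δ)) *
        ((n : ℝ) * y * ((1 - a) * y - ((n : ℝ) - 1) * (a - δ)))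
      = (n:ℝ) * (a - δ) * (y - x) *
      ((1 - a) * ((n:ℝ) + 1) * (2 - a) * (x * y)
      - (n:ℝ)^2 * (1 - a) * (a - δ) * (x + y) + (n:ℝ)^2 * ((n:ℝ) - 1) * (a - δ)^2) := by
    ring
  linarith [hfac, key]
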